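/- arXiv:2512.02691 — 5 statements merged into one kernel-verified Lean document; each statement's English description precedes it below -/
import Mathlib

section
/- If x ∈ ℤ_{≥0}^d satisfies Ax = b and x_j ≤ u_j for all j ∈ {1,…,d}, then there exists a unique y ∈ ℤ_{≥0}^{d+1} such that the pair (x, y) satisfies the aggregated equation. -/
lemma agg_key (M : ℤ) (hM : 2 ≤ M) :
    ∀ (d : ℕ) (u z : ℕ → ℤ) (q w V : ℤ),
      (∀ j, j < d → 0 ≤ u j) → (∀ j, j < d → u j ≤ M - 1) →
      (∀ j, j < d → 0 ≤ z j) → 0 ≤ q →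
      (q + ((∑ j ∈ Finset.range d, M ^ j * z j) + M ^ d * w)
        = (∑ j ∈ Finset.range d, M ^ j * u j) + M ^ d * V) →
      (q + (∑ j ∈ Finset.range d, z j) + (V - ∑ j ∈ Finset.range d, u j) ≤ w) →
      (w = V ∧ (q + ∑ j ∈ Finset.range d, z j = ∑ j ∈ Finset.range d, u j) ∧
        (0 < d → z 0 + q = u 0) ∧ (∀ j, 0 < j → j < d → z j = u j)) := by
  intro d
  induction d with
  | zero =>
    intro u z q w V _ _ _ hq hE hC
    simp only [Finset.range_zero, Finset.sum_empty, pow_zero, one_mul, zero_add, add_zero,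
      sub_zero] at hE hC ⊢
    refine ⟨by omega, by omega, by omega, by omega⟩
  | succ d ih =>
    intro u z q w V hu0 hu1 hz0 hq hE hC
    have hpeel : ∀ f : ℕ → ℤ, (∑ j ∈ Finset.range (d+1), M ^ j * f j)
        = M * (∑ j ∈ Finset.range d, M ^ j * f (j+1)) + f 0 := by
      intro f
      rw [Finset.sum_range_succ', Finset.mul_sum]
      simp only [pow_zero, one_mul]
      congr 1
      exact Finset.sum_congr rfl fun i _ => by ring
    have hpeel' : ∀ f : ℕ → ℤ, (∑ j ∈ Finset.range (d+1), f j)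
        = (∑ j ∈ Finset.range d, f (j+1)) + f 0 := fun f => Finset.sum_range_succ' f d
    rw [hpeel z, hpeel u] at hE
    rw [hpeel' z, hpeel' u] at hC
    set p : ℤ := ((∑ j ∈ Finset.range d, M ^ j * u (j+1)) + M ^ d * V)
      - ((∑ j ∈ Finset.range d, M ^ j * z (j+1)) + M ^ d * w) with hp
    have hMp : M * p = q + z 0 - u 0 := by rw [hp]; linear_combination -hE
    have hq0 : 0 ≤ z 0 := hz0 0 (Nat.succ_pos d)
    have hub : u 0 ≤ M - 1 := hu1 0 (Nat.succ_pos d)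
    have hp0 : 0 ≤ p := by
      by_contra h
      push_neg at h
      have h1 : p ≤ -1 := by omega
      have h2 : M * p ≤ M * (-1) := mul_le_mul_of_nonneg_left h1 (by linarith)
      linarith
    have hE' : p + ((∑ j ∈ Finset.range d, M ^ j * z (j+1)) + M ^ d * w)
        = (∑ j ∈ Finset.range d, M ^ j * u (j+1)) + M ^ d * V := by rw [hp]; ring
    have hMpp : p ≤ M * p := by nlinarith
    have hC' : p + (∑ j ∈ Finset.range d, z (j+1))
        + (V - ∑ j ∈ Finset.range d, u (j+1)) ≤ w := by linarith
    obtain ⟨hwV, hsum, hz0', hzj'⟩ := ih (fun j => u (j+1)) (fun j => z (j+1)) p w V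
      (fun j hj => hu0 (j+1) (by omega)) (fun j hj => hu1 (j+1) (by omega))
      (fun j hj => hz0 (j+1) (by omega)) hp0 hE' hC'
    have hpz : p = 0 := by
      have h3 : 2 * p ≤ M * p := by nlinarith
      linarith [hC, hwV, hMp, hsum]
    refine ⟨hwV, ?_, fun _ => by linarith, ?_⟩
    · rw [hpeel' z, hpeel' u]; linarith
    · intro j hj hj'
      obtain ⟨i, rfl⟩ : ∃ i, j = i + 1 := ⟨j - 1, by omega⟩
      rcases Nat.eq_zero_or_pos i with hi | hi
      · subst hi
        have := hz0' (by omega)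
        simpa [hpz] using this
      · exact hzj' i hi (by omega)

lemma agg_fin_sum_eq (d : ℕ) (f : Fin d → ℤ) (g : ℕ → ℤ)
    (h : ∀ (n : ℕ) (hn : n < d), g n = f ⟨n, hn⟩) :
    (∑ j : Fin d, f j) = ∑ n ∈ Finset.range d, g n := by
  rw [← Fin.sum_univ_eq_sum_range]
  exact Finset.sum_congr rfl fun i _ => (h i i.isLt).symm



/-- `Δ`, the largest absolute value of an entry of `A`. -/
def aggDelta (k d : ℕ) (A : Fin k → Fin d → ℤ) : ℤ :=
  ((Finset.univ.sup fun p : Fin k × Fin d => (A p.1 p.2).natAbs : ℕ) : ℤ)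

/-- The base `M := Δ·U + max(‖b‖_∞, ‖u‖_∞) + Δ + 2` used in the aggregation. -/
def aggM (k d : ℕ) (A : Fin k → Fin d → ℤ) (b : Fin k → ℤ) (u : Fin d → ℤ) : ℤ :=
  aggDelta k d A * (∑ j, u j) +
    max ((Finset.univ.sup fun i => (b i).natAbs : ℕ) : ℤ)
        ((Finset.univ.sup fun j => (u j).natAbs : ℕ) : ℤ) +
    aggDelta k d A + 2

/-- The aggregated equation of Jansen–Pirotton–Tutas:
`Σ_{i=1}^k M^{i−1}·Σ_j a_{ij} x_j + Σ_{j=1}^d M^{k+j−1}·(x_j + y_j)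
 + M^{k+d}·(Σ_j (x_j + y_j) + y_{d+1})
 = Σ_{i=1}^k M^{i−1} b_i + Σ_{j=1}^d M^{k+j−1} u_j + M^{k+d}·U`. -/
def AggEq (k d : ℕ) (A : Fin k → Fin d → ℤ) (b : Fin k → ℤ) (u : Fin d → ℤ)
    (x : Fin d → ℤ) (y : Fin (d + 1) → ℤ) : Prop :=
  (∑ i : Fin k, aggM k d A b u ^ (i : ℕ) * ∑ j : Fin d, A i j * x j)
    + (∑ j : Fin d, aggM k d A b u ^ (k + (j : ℕ)) * (x j + y j.castSucc))
    + aggM k d A b u ^ (k + d) *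
        ((∑ j : Fin d, (x j + y j.castSucc)) + y (Fin.last d))
  = (∑ i : Fin k, aggM k d A b u ^ (i : ℕ) * b i)
    + (∑ j : Fin d, aggM k d A b u ^ (k + (j : ℕ)) * u j)
    + aggM k d A b u ^ (k + d) * (∑ j, u j)

/-- If `x ∈ ℤ_{≥0}^d` satisfies `Ax = b` and `x ≤ u`, then there is a
unique `y ∈ ℤ_{≥0}^{d+1}` such that `(x, y)` satisfies the aggregated equation. -/
theorem aggregation_exists_unique (k d : ℕ)
    (A : Fin k → Fin d → ℤ) (b : Fin k → ℤ) (u : Fin d → ℤ)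
    (hu : ∀ j, 0 ≤ u j)
    (x : Fin d → ℤ) (hx : ∀ j, 0 ≤ x j)
    (hAx : ∀ i, (∑ j, A i j * x j) = b i)
    (hxu : ∀ j, x j ≤ u j) :
    ∃! y : Fin (d + 1) → ℤ, (∀ j, 0 ≤ y j) ∧ AggEq k d A b u x y := by
  set M : ℤ := aggM k d A b u with hMdef
  have hΔ0 : (0:ℤ) ≤ aggDelta k d A := Int.natCast_nonneg _
  have husum : (0:ℤ) ≤ ∑ j, u j := Finset.sum_nonneg fun j _ => hu j
  have hmax0 : (0:ℤ) ≤ max ((Finset.univ.sup fun i => (b i).natAbs : ℕ) : ℤ)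
      ((Finset.univ.sup fun j => (u j).natAbs : ℕ) : ℤ) :=
    le_max_of_le_left (Int.natCast_nonneg _)
  have hM2 : 2 ≤ M := by
    rw [hMdef, aggM]
    have := mul_nonneg hΔ0 husum
    linarith
  have hub : ∀ j, u j ≤ M - 1 := by
    intro j
    have h1 : u j ≤ ((u j).natAbs : ℤ) := Int.le_natAbs
    have h2 : ((u j).natAbs : ℤ) ≤ ((Finset.univ.sup fun j => (u j).natAbs : ℕ) : ℤ) :=
      Nat.cast_le.mpr (Finset.le_sup (f := fun j => (u j).natAbs) (Finset.mem_univ j))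
    have h3 : ((Finset.univ.sup fun j => (u j).natAbs : ℕ) : ℤ)
        ≤ max ((Finset.univ.sup fun i => (b i).natAbs : ℕ) : ℤ)
          ((Finset.univ.sup fun j => (u j).natAbs : ℕ) : ℤ) := le_max_right _ _
    rw [hMdef, aggM]
    have := mul_nonneg hΔ0 husum
    linarith
  -- the canonical witness
  set y₀ : Fin (d+1) → ℤ := fun j =>
    if h : (j:ℕ) < d then u ⟨(j:ℕ), h⟩ - x ⟨(j:ℕ), h⟩ else 0 with hy₀def
  have hy₀cast : ∀ i : Fin d, y₀ i.castSucc = u i - x i := by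
    intro i
    have hi : ((i.castSucc : Fin (d+1)) : ℕ) < d := by simp [i.isLt]
    simp only [hy₀def, dif_pos hi]
    have h2 : (⟨((i.castSucc : Fin (d+1)) : ℕ), hi⟩ : Fin d) = i := Fin.ext (by simp)
    rw [h2]
  have hy₀last : y₀ (Fin.last d) = 0 := by
    simp [hy₀def]
  have hB : (∑ i : Fin k, M ^ (i : ℕ) * ∑ j : Fin d, A i j * x j)
      = ∑ i : Fin k, M ^ (i : ℕ) * b i :=
    Finset.sum_congr rfl fun i _ => by rw [hAx i]
  refine ⟨y₀, ⟨?_, ?_⟩, ?_⟩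
  · -- nonnegativity of y₀
    intro j
    rw [hy₀def]
    by_cases h : (j:ℕ) < d
    · simp only [dif_pos h]
      linarith [hxu ⟨(j:ℕ), h⟩]
    · simp [dif_neg h]
  · -- AggEq for y₀
    rw [AggEq]
    rw [hB, hy₀last]
    have h2 : (∑ j : Fin d, M ^ (k + (j:ℕ)) * (x j + y₀ j.castSucc))
        = ∑ j : Fin d, M ^ (k + (j:ℕ)) * u j :=
      Finset.sum_congr rfl fun j _ => by rw [hy₀cast j]; ring_nf
    have h3 : (∑ j : Fin d, (x j + y₀ j.castSucc)) = ∑ j, u j :=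
      Finset.sum_congr rfl fun j _ => by rw [hy₀cast j]; ring
    rw [h2, h3, add_zero]
  · -- uniqueness
    rintro y ⟨hy0, hyE⟩
    set zt : ℕ → ℤ := fun n =>
      if h : n < d then x ⟨n, h⟩ + y (Fin.castSucc ⟨n, h⟩) else 0 with hzt
    set ut : ℕ → ℤ := fun n => if h : n < d then u ⟨n, h⟩ else 0 with hut
    set W : ℤ := (∑ j : Fin d, (x j + y j.castSucc)) + y (Fin.last d) with hW
    set V : ℤ := ∑ j, u j with hV
    have hztv : ∀ (n : ℕ) (hn : n < d), zt n = x ⟨n, hn⟩ + y (Fin.castSucc ⟨n, hn⟩) :=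
      fun n hn => by rw [hzt]; exact dif_pos hn
    have hutv : ∀ (n : ℕ) (hn : n < d), ut n = u ⟨n, hn⟩ :=
      fun n hn => by rw [hut]; exact dif_pos hn
    have hXZ : (∑ j : Fin d, M ^ (k + (j:ℕ)) * (x j + y j.castSucc))
        = M ^ k * ∑ n ∈ Finset.range d, M ^ n * zt n := by
      rw [Finset.mul_sum]
      refine agg_fin_sum_eq d _ _ fun n hn => ?_
      rw [hztv n hn, pow_add]; ring
    have hXU : (∑ j : Fin d, M ^ (k + (j:ℕ)) * u j)
        = M ^ k * ∑ n ∈ Finset.range d, M ^ n * ut n := by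
      rw [Finset.mul_sum]
      refine agg_fin_sum_eq d _ _ fun n hn => ?_
      rw [hutv n hn, pow_add]; ring
    have hSZ : (∑ j : Fin d, (x j + y j.castSucc)) = ∑ n ∈ Finset.range d, zt n :=
      agg_fin_sum_eq d _ _ fun n hn => hztv n hn
    have hSU : V = ∑ n ∈ Finset.range d, ut n :=
      agg_fin_sum_eq d _ _ fun n hn => hutv n hn
    rw [AggEq, hB, hXZ, hXU] at hyE
    have hEq2 : M ^ k * ((∑ n ∈ Finset.range d, M ^ n * zt n) + M ^ d * W)
        = M ^ k * ((∑ n ∈ Finset.range d, M ^ n * ut n) + M ^ d * V) := by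
      rw [hW, hV]
      rw [pow_add] at hyE
      linear_combination hyE
    have hMne : (M:ℤ) ^ k ≠ 0 := pow_ne_zero k (by linarith)
    have hcancel := mul_left_cancel₀ hMne hEq2
    have hkey := agg_key M hM2 d ut zt 0 W V
      (fun j hj => by rw [hutv j hj]; exact hu _)
      (fun j hj => by rw [hutv j hj]; exact hub _)
      (fun j hj => by rw [hztv j hj]; exact add_nonneg (hx _) (hy0 _))
      le_rfl
      (by rw [zero_add]; exact hcancel)
      (by
        rw [zero_add, ← hSU, ← hSZ, sub_self, add_zero, hW]
        linarith [hy0 (Fin.last d)])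
    obtain ⟨hWV, hsum, hz0c, hzjc⟩ := hkey
    have hall : ∀ (n : ℕ) (hn : n < d), zt n = ut n := by
      intro n hn
      rcases Nat.eq_zero_or_pos n with h | h
      · subst h
        have := hz0c hn
        linarith
      · exact hzjc n h hn
    have hxyu : ∀ i : Fin d, x i + y i.castSucc = u i := by
      intro i
      have := hall (i : ℕ) i.isLt
      rw [hztv _ i.isLt, hutv _ i.isLt] at this
      simpa using this
    have hylast : y (Fin.last d) = 0 := by
      have h1 : (∑ j : Fin d, (x j + y j.castSucc)) = ∑ j, u j :=
        Finset.sum_congr rfl fun j _ => hxyu j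
      have h2 : W = V := hWV
      rw [hW, hV, h1] at h2
      linarith
    funext j
    refine Fin.lastCases ?_ ?_ j
    · rw [hylast, hy₀last]
    · intro i
      rw [hy₀cast i]
      linarith [hxyu i]
end

section
/- If x ∈ ℤ_{≥0}^d and y ∈ ℤ_{≥0}^{d+1} satisfy the aggregated equation, then Ax = b and x_j ≤ u_j for all j ∈ {1,…,d}. -/
open Finset

/-- Phase 0: geometric bound on the top coefficient. -/
lemma agg_phase0 (M : ℤ) (hM : 2 ≤ M) (n : ℕ) (t : ℕ → ℤ) (C : ℤ) (hC : 0 ≤ C)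
    (hlb : ∀ l, l < n → -C ≤ t l) (f : ℤ)
    (heq : (∑ l ∈ range n, M ^ l * t l) + M ^ n * f = 0) :
    f * (M - 1) ≤ C := by
  have hpow : (0:ℤ) < M ^ n := pow_pos (by linarith) n
  have hsum : -(C * ∑ l ∈ range n, M ^ l) ≤ ∑ l ∈ range n, M ^ l * t l := by
    rw [Finset.mul_sum, ← Finset.sum_neg_distrib]
    apply Finset.sum_le_sum
    intro l hl
    have h1 := hlb l (Finset.mem_range.1 hl)
    have h2 : (0:ℤ) ≤ M ^ l := pow_nonneg (by linarith) l
    nlinarith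
  have hG : (∑ l ∈ range n, M ^ l) * (M - 1) = M ^ n - 1 := geom_sum_mul M n
  have h3 : M ^ n * f ≤ C * ∑ l ∈ range n, M ^ l := by linarith
  have h4 : M ^ n * f * (M - 1) ≤ C * (M ^ n - 1) := by
    calc M ^ n * f * (M - 1) ≤ (C * ∑ l ∈ range n, M ^ l) * (M - 1) :=
          mul_le_mul_of_nonneg_right h3 (by linarith)
      _ = C * ((∑ l ∈ range n, M ^ l) * (M - 1)) := by ring
      _ = C * (M ^ n - 1) := by rw [hG]
  have h5 : M ^ n * (f * (M - 1)) ≤ M ^ n * C := by nlinarith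
  exact le_of_mul_le_mul_left h5 hpow

/-- Phase 1: bounded digits summing to zero are all zero. -/
lemma agg_phase1 (M : ℤ) (hM : 2 ≤ M) :
    ∀ (n : ℕ) (c : ℕ → ℤ) (R : ℤ), (∀ i, i < n → |c i| < M) →
      (∑ i ∈ range n, M ^ i * c i) + M ^ n * R = 0 →
      (∀ i, i < n → c i = 0) ∧ R = 0 := by
  intro n
  induction n with
  | zero =>
    intro c R _ heq
    simp only [range_zero, sum_empty, pow_zero, one_mul, zero_add] at heq
    exact ⟨fun i hi => absurd hi (Nat.not_lt_zero i), heq⟩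
  | succ n ih =>
    intro c R hlt heq
    rw [Finset.sum_range_succ'] at heq
    simp only [pow_zero, one_mul] at heq
    set g : ℤ := -((∑ i ∈ range n, M ^ i * c (i + 1)) + M ^ n * R) with hg
    have he0 : c 0 = M * g := by
      have : ∀ i, M ^ (i + 1) * c (i + 1) = M * (M ^ i * c (i + 1)) := by
        intro i; ring
      simp only [this, ← Finset.mul_sum] at heq
      have : M ^ (n + 1) * R = M * (M ^ n * R) := by ring
      rw [this] at heq
      rw [hg]; linear_combination heq
    have hc0 : c 0 = 0 := Int.eq_zero_of_abs_lt_dvd ⟨g, he0⟩ (hlt 0 (Nat.succ_pos n))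
    have hgz : g = 0 := by
      have : M * g = 0 := hc0 ▸ he0.symm
      rcases mul_eq_zero.1 this with h | h
      · linarith
      · exact h
    have hinner : (∑ i ∈ range n, M ^ i * c (i + 1)) + M ^ n * R = 0 := by
      have := hg
      rw [hgz] at this; linarith [this]
    obtain ⟨h1, h2⟩ := ih (fun i => c (i + 1)) R (fun i hi => hlt (i + 1) (Nat.succ_lt_succ hi)) hinner
    refine ⟨fun i hi => ?_, h2⟩
    cases i with
    | zero => exact hc0
    | succ i => exact h1 i (Nat.lt_of_succ_lt_succ hi)
open Finset

/-- Phase 2: nonnegative-deficit digit system forces everything to vanish. -/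
lemma agg_phase2 (M : ℤ) (hM : 2 ≤ M) :
    ∀ (n : ℕ) (e : ℕ → ℤ) (w : ℤ), (∀ j, j < n → -(M - 2) ≤ e j) →
      (∑ j ∈ range n, M ^ j * e j) = M ^ n * w →
      (∑ j ∈ range n, e j) + w ≤ 0 →
      w = 0 ∧ ∀ j, j < n → e j = 0 := by
  intro n
  induction n with
  | zero =>
    intro e w _ heq _
    simp only [range_zero, sum_empty, pow_zero, one_mul] at heq
    exact ⟨heq.symm, fun j hj => absurd hj (Nat.not_lt_zero j)⟩
  | succ n ih =>
    intro e w hlb heq hsum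
    rw [Finset.sum_range_succ'] at heq
    simp only [pow_zero, one_mul] at heq
    set g : ℤ := M ^ n * w - ∑ j ∈ range n, M ^ j * e (j + 1) with hg
    have he0 : e 0 = M * g := by
      have hre : ∀ j, M ^ (j + 1) * e (j + 1) = M * (M ^ j * e (j + 1)) := by
        intro j; ring
      simp only [hre, ← Finset.mul_sum] at heq
      have hMn : M ^ (n + 1) * w = M * (M ^ n * w) := by ring
      rw [hMn] at heq
      rw [hg]; linarith [heq]
    have hgnn : 0 ≤ g := by
      by_contra h
      push_neg at h
      have hg1 : g ≤ -1 := by linarith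
      have := hlb 0 (Nat.succ_pos n)
      nlinarith
    have he0nn : g ≤ e 0 := by nlinarith
    -- now case on n
    rcases Nat.eq_zero_or_pos n with hn | hn
    · subst hn
      simp only [range_zero, sum_empty, pow_zero, one_mul, zero_add] at heq
      rw [Finset.sum_range_succ'] at hsum
      simp only [range_zero, sum_empty, zero_add] at hsum
      -- hsum : e 0 + w ≤ 0
      have hgw : g = w := by rw [hg]; simp
      have hw0 : w = 0 := by nlinarith [hgw ▸ hgnn, he0]
      refine ⟨hw0, fun j hj => ?_⟩
      interval_cases j
      rw [he0, hgw, hw0, mul_zero]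
    · -- n ≥ 1
      set e' : ℕ → ℤ := fun j => if j = 0 then e 1 + g else e (j + 1) with he'
      have hterm : ∀ j, M ^ j * e' j = M ^ j * e (j + 1) + (if j = 0 then g else 0) := by
        intro j
        by_cases hj : j = 0 <;> simp [he', hj]
      have hterm2 : ∀ j, e' j = e (j + 1) + (if j = 0 then g else 0) := by
        intro j
        by_cases hj : j = 0 <;> simp [he', hj]
      have hif : (∑ j ∈ range n, (if j = 0 then g else 0)) = g := by
        rw [Finset.sum_ite_eq' (range n) 0 (fun _ => g)]
        simp [Finset.mem_range, hn]
      have heq' : (∑ j ∈ range n, M ^ j * e' j) = M ^ n * w := by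
        simp only [hterm, Finset.sum_add_distrib, hif]
        have hMecancel : M * ((∑ j ∈ range n, M ^ j * e (j + 1)) + g) = M * (M ^ n * w) := by
          have hre : ∀ j, M ^ (j + 1) * e (j + 1) = M * (M ^ j * e (j + 1)) := by
            intro j; ring
          simp only [hre, ← Finset.mul_sum] at heq
          have hMn : M ^ (n + 1) * w = M * (M ^ n * w) := by ring
          rw [hMn] at heq
          rw [mul_add, ← he0]
          linarith [heq]
        have hM0 : (M:ℤ) ≠ 0 := by linarith
        exact mul_left_cancel₀ hM0 hMecancel
      have hlb' : ∀ j, j < n → -(M - 2) ≤ e' j := by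
        intro j hj
        by_cases hj0 : j = 0
        · subst hj0
          simp only [he', if_pos rfl]
          have := hlb 1 (by omega)
          linarith
        · simp only [he', if_neg hj0]
          exact hlb (j + 1) (by omega)
      have hsum' : (∑ j ∈ range n, e' j) + w ≤ 0 := by
        simp only [hterm2, Finset.sum_add_distrib, hif]
        rw [Finset.sum_range_succ'] at hsum
        linarith
      obtain ⟨hw0, hez⟩ := ih e' w hlb' heq' hsum'
      have he1 : e 1 = -g := by
        have := hez 0 hn
        simp only [he', if_pos rfl] at this
        linarith
      have hrest : ∀ j, 1 ≤ j → j < n → e (j + 1) = 0 := by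
        intro j h1 hj
        have := hez j hj
        simp only [he', if_neg (by omega : j ≠ 0)] at this
        exact this
      obtain ⟨m, rfl⟩ : ∃ m, n = m + 1 := ⟨n - 1, by omega⟩
      have hsvals : (∑ j ∈ range (m + 1), e (j + 1)) = -g := by
        rw [Finset.sum_range_succ']
        have hz : ∀ j ∈ range m, e (j + 1 + 1) = 0 := fun j hj =>
          hrest (j + 1) (by omega) (by have := Finset.mem_range.1 hj; omega)
        rw [Finset.sum_congr rfl hz]
        simp [he1]
      have hg0 : g = 0 := by
        rw [Finset.sum_range_succ', hsvals] at hsum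
        nlinarith
      refine ⟨hw0, fun j hj => ?_⟩
      match j with
      | 0 => rw [he0, hg0, mul_zero]
      | 1 => rw [he1, hg0, neg_zero]
      | (i + 2) => exact hrest (i + 1) (by omega) (by omega)

set_option maxHeartbeats 1000000 in
/-- If `x ∈ ℤ_{≥0}^d` and `y ∈ ℤ_{≥0}^{d+1}` satisfy the aggregated
equation, then `Ax = b` and `x_j ≤ u_j` for all `j`. -/
theorem aggregation_sound (k d : ℕ)
    (A : Fin k → Fin d → ℤ) (b : Fin k → ℤ) (u : Fin d → ℤ)
    (hu : ∀ j, 0 ≤ u j)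
    (x : Fin d → ℤ) (y : Fin (d + 1) → ℤ)
    (hx : ∀ j, 0 ≤ x j) (hy : ∀ j, 0 ≤ y j)
    (hagg : AggEq k d A b u x y) :
    (∀ i, (∑ j, A i j * x j) = b i) ∧ (∀ j, x j ≤ u j) := by
  classical
  unfold AggEq at hagg
  set M := aggM k d A b u with hMdef
  set Δ := aggDelta k d A with hDdef
  set Bb : ℤ := max ((Finset.univ.sup fun i => (b i).natAbs : ℕ) : ℤ)
      ((Finset.univ.sup fun j => (u j).natAbs : ℕ) : ℤ) with hBdef
  set U : ℤ := ∑ j, u j with hUdef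
  have hMeq : M = Δ * U + Bb + Δ + 2 := rfl
  have hD0 : (0:ℤ) ≤ Δ := Int.natCast_nonneg _
  have hB0 : (0:ℤ) ≤ Bb := le_trans (Int.natCast_nonneg _) (le_max_left _ _)
  have hU0 : (0:ℤ) ≤ U := Finset.sum_nonneg fun j _ => hu j
  have hDU0 : (0:ℤ) ≤ Δ * U := mul_nonneg hD0 hU0
  have hM2 : (2:ℤ) ≤ M := by rw [hMeq]; linarith
  have hA : ∀ i j, |A i j| ≤ Δ := by
    intro i j
    rw [Int.abs_eq_natAbs]
    exact Int.ofNat_le.mpr (Finset.le_sup (f := fun p : Fin k × Fin d => (A p.1 p.2).natAbs)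
      (Finset.mem_univ (i, j)))
  have hbB : ∀ i, |b i| ≤ Bb := by
    intro i
    refine le_trans ?_ (le_max_left _ _)
    rw [Int.abs_eq_natAbs]
    exact_mod_cast Finset.le_sup (f := fun i => (b i).natAbs) (Finset.mem_univ i)
  have huB : ∀ j, u j ≤ Bb := by
    intro j
    refine le_trans (le_abs_self _) (le_trans ?_ (le_max_right _ _))
    rw [Int.abs_eq_natAbs]
    exact_mod_cast Finset.le_sup (f := fun j => (u j).natAbs) (Finset.mem_univ j)
  -- abbreviations
  set Sx : ℤ := ∑ j, x j with hSxdef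
  set S : ℤ := (∑ j : Fin d, (x j + y j.castSucc)) + y (Fin.last d) with hSdef
  have hSxS : Sx ≤ S := by
    rw [hSxdef, hSdef]
    have h1 : (∑ j, x j) ≤ ∑ j : Fin d, (x j + y j.castSucc) :=
      Finset.sum_le_sum fun j _ => le_add_of_nonneg_right (hy _)
    linarith [hy (Fin.last d)]
  have hSx0 : (0:ℤ) ≤ Sx := Finset.sum_nonneg fun j _ => hx j
  have hS0 : (0:ℤ) ≤ S := le_trans hSx0 hSxS
  have hAx : ∀ p : Fin k, |∑ j, A p j * x j| ≤ Δ * Sx := by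
    intro p
    calc |∑ j, A p j * x j| ≤ ∑ j, |A p j * x j| := Finset.abs_sum_le_sum_abs _ _
      _ ≤ ∑ j, Δ * x j := by
          refine Finset.sum_le_sum fun j _ => ?_
          rw [abs_mul, abs_of_nonneg (hx j)]
          exact mul_le_mul_of_nonneg_right (hA p j) (hx j)
      _ = Δ * Sx := by rw [hSxdef, Finset.mul_sum]
  -- digit functions
  set c' : ℕ → ℤ := fun l => if h : l < k then (∑ j, A ⟨l, h⟩ j * x j) - b ⟨l, h⟩ else 0
    with hc'def
  set e' : ℕ → ℤ := fun l =>
      if h : l < d then x ⟨l, h⟩ + y (Fin.castSucc ⟨l, h⟩) - u ⟨l, h⟩ else 0 with he'def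
  set t : ℕ → ℤ := fun l => if l < k then c' l else e' (l - k) with htdef
  have hc'pos : ∀ l (h : l < k), c' l = (∑ j, A ⟨l, h⟩ j * x j) - b ⟨l, h⟩ :=
    fun l h => dif_pos h
  have he'pos : ∀ l (h : l < d), e' l = x ⟨l, h⟩ + y (Fin.castSucc ⟨l, h⟩) - u ⟨l, h⟩ :=
    fun l h => dif_pos h
  have he'neg : ∀ l, ¬ l < d → e' l = 0 := fun l h => dif_neg h
  have hc'fin : ∀ i : Fin k, c' (i : ℕ) = (∑ j, A i j * x j) - b i :=
    fun i => dif_pos i.isLt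
  have he'fin : ∀ j : Fin d, e' (j : ℕ) = x j + y j.castSucc - u j :=
    fun j => dif_pos j.isLt
  have hsum_c : ∑ l ∈ range k, M ^ l * c' l
      = ∑ i : Fin k, M ^ (i:ℕ) * ((∑ j, A i j * x j) - b i) := by
    rw [← Fin.sum_univ_eq_sum_range (fun l => M ^ l * c' l) k]
    exact Finset.sum_congr rfl fun i _ => by rw [hc'fin i]
  have hsum_e : ∑ l ∈ range d, M ^ (k + l) * e' l
      = ∑ j : Fin d, M ^ (k + (j:ℕ)) * (x j + y j.castSucc - u j) := by
    rw [← Fin.sum_univ_eq_sum_range (fun l => M ^ (k + l) * e' l) d]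
    exact Finset.sum_congr rfl fun j _ => by rw [he'fin j]
  have hsum_e2 : ∑ l ∈ range d, e' l = ∑ j : Fin d, (x j + y j.castSucc - u j) := by
    rw [← Fin.sum_univ_eq_sum_range e' d]
    exact Finset.sum_congr rfl fun j _ => by rw [he'fin j]
  -- the key split equation
  have hkey : (∑ l ∈ range k, M ^ l * c' l) + (∑ l ∈ range d, M ^ (k + l) * e' l)
      + M ^ (k + d) * (S - U) = 0 := by
    rw [hsum_c, hsum_e]
    simp only [mul_sub, Finset.sum_sub_distrib]
    linarith [hagg]
  -- combined digit sum over range (k + d)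
  have hsplit : ∑ l ∈ range (k + d), M ^ l * t l
      = (∑ l ∈ range k, M ^ l * c' l) + ∑ l ∈ range d, M ^ (k + l) * e' l := by
    rw [Finset.range_eq_Ico,
      ← Finset.sum_Ico_consecutive (fun l => M ^ l * t l) (Nat.zero_le k) (Nat.le_add_right k d),
      ← Finset.range_eq_Ico, Finset.sum_Ico_eq_sum_range, Nat.add_sub_cancel_left]
    congr 1
    · refine Finset.sum_congr rfl fun l hl => ?_
      have hlk : l < k := Finset.mem_range.1 hl
      rw [show t l = c' l from if_pos hlk]
    · refine Finset.sum_congr rfl fun l hl => ?_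
      have hnk : ¬ (k + l < k) := by omega
      rw [show t (k + l) = e' (k + l - k) from if_neg hnk, Nat.add_sub_cancel_left]
  -- Phase 0 : S ≤ U
  have hC0 : (0:ℤ) ≤ Δ * S + Bb := by nlinarith
  have htlb : ∀ l, l < k + d → -(Δ * S + Bb) ≤ t l := by
    intro l hl
    by_cases hlk : l < k
    · have htl : t l = c' l := if_pos hlk
      rw [htl, hc'pos l hlk]
      have h1 := hAx ⟨l, hlk⟩
      have h2 := hbB ⟨l, hlk⟩
      have h3 : Δ * Sx ≤ Δ * S := mul_le_mul_of_nonneg_left hSxS hD0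
      have h4 := neg_abs_le (∑ j, A (⟨l, hlk⟩ : Fin k) j * x j)
      have h5 := neg_abs_le (b (⟨l, hlk⟩ : Fin k))
      have h6 := abs_nonneg (b (⟨l, hlk⟩ : Fin k))
      linarith [le_abs_self (b (⟨l, hlk⟩ : Fin k))]
    · have htl : t l = e' (l - k) := if_neg hlk
      rw [htl]
      by_cases hld : l - k < d
      · rw [he'pos _ hld]
        have h1 := huB ⟨l - k, hld⟩
        have h2 := hx ⟨l - k, hld⟩
        have h3 := hy (Fin.castSucc (⟨l - k, hld⟩ : Fin d))
        nlinarith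
      · rw [he'neg _ hld]; linarith
  have hkeyR : (∑ l ∈ range (k + d), M ^ l * t l) + M ^ (k + d) * (S - U) = 0 := by
    rw [hsplit]; linarith [hkey]
  have hf1 : (S - U) * (M - 1) ≤ Δ * S + Bb :=
    agg_phase0 M hM2 (k + d) t (Δ * S + Bb) hC0 htlb (S - U) hkeyR
  have hSU : S ≤ U := by
    by_contra hcon
    push_neg at hcon
    have hf1' : (0:ℤ) ≤ S - U - 1 := by linarith
    have hM1 : (0:ℤ) ≤ M - 1 - Δ := by rw [hMeq]; linarith
    nlinarith [mul_nonneg hf1' hM1]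
  -- Phase 1 : all c-digits vanish
  have hclt : ∀ l, l < k → |c' l| < M := by
    intro l hl
    rw [hc'pos l hl]
    have h1 := hAx ⟨l, hl⟩
    have h2 := hbB ⟨l, hl⟩
    have h3 : Δ * Sx ≤ Δ * U := mul_le_mul_of_nonneg_left (le_trans hSxS hSU) hD0
    calc |(∑ j, A (⟨l, hl⟩ : Fin k) j * x j) - b ⟨l, hl⟩|
        ≤ |∑ j, A (⟨l, hl⟩ : Fin k) j * x j| + |b ⟨l, hl⟩| := abs_sub _ _
      _ < M := by rw [hMeq]; linarith
  have heqn1 : (∑ l ∈ range k, M ^ l * c' l)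
      + M ^ k * ((∑ l ∈ range d, M ^ l * e' l) + M ^ d * (S - U)) = 0 := by
    have h1 : M ^ k * ((∑ l ∈ range d, M ^ l * e' l) + M ^ d * (S - U))
        = (∑ l ∈ range d, M ^ (k + l) * e' l) + M ^ (k + d) * (S - U) := by
      rw [mul_add, Finset.mul_sum, ← mul_assoc, ← pow_add]
      congr 1
      exact Finset.sum_congr rfl fun l _ => by rw [← mul_assoc, ← pow_add]
    rw [h1]; linarith [hkey]
  obtain ⟨hc0, hR0⟩ := agg_phase1 M hM2 k c' _ hclt heqn1
  -- Phase 2 : all e-digits vanish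
  have heq2 : (∑ l ∈ range d, M ^ l * e' l) = M ^ d * (U - S) := by
    have : M ^ d * (S - U) = -(M ^ d * (U - S)) := by ring
    linarith [hR0, this]
  have hlb2 : ∀ l, l < d → -(M - 2) ≤ e' l := by
    intro l hl
    rw [he'pos l hl]
    have h1 := huB ⟨l, hl⟩
    have h2 := hx ⟨l, hl⟩
    have h3 := hy (Fin.castSucc (⟨l, hl⟩ : Fin d))
    have h4 : Bb ≤ M - 2 := by rw [hMeq]; linarith
    linarith
  have hsum2 : (∑ l ∈ range d, e' l) + (U - S) ≤ 0 := by
    rw [hsum_e2]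
    simp only [Finset.sum_sub_distrib]
    linarith [hy (Fin.last d), hSdef, hUdef]
  obtain ⟨hw0, he0all⟩ := agg_phase2 M hM2 d e' (U - S) hlb2 heq2 hsum2
  constructor
  · intro i
    have h := hc0 (i : ℕ) i.isLt
    rw [hc'fin i] at h
    linarith
  · intro j
    have h := he0all (j : ℕ) j.isLt
    rw [he'fin j] at h
    linarith [hy j.castSucc]
end

section
/- Let n ≥ 2 be a power of two and write log n for log₂ n. Let a well-structured 3-CNF formula with n variables and m ≥ 1 clauses, an integer γ > 3, and its encoding Z be given. Fix i ∈ {0,…,n−1} and let x_1^bin,…,x_{log n}^bin ∈ {0,1} be the binary digits of i with x_1^bin most significant, i.e. i = Σ_{ℓ=1}^{log n} 2^{log n − ℓ}·x_ℓ^bin. Suppose nonnegative integers z_0,…,z_{log n}, q_0,…,q_{log n − 1}, r_0,…,r_{log n − 1} satisfy: z_0 = Z; z_j = q_j·(γ^m)^{3n/2^{j+1}} + r_j and r_j ≤ (γ^m)^{3n/2^{j+1}} − 1 for all j ∈ {0,…,log n − 1}; and z_{j+1} = q_j·x_{j+1}^bin + r_j·(1 − x_{j+1}^bin) for all j ∈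 {0,…,log n − 1}. Then all these values are uniquely determined by i and Z, and z_{log n} = C_pos1^(i) + C_pos2^(i)·γ^m + C_neg^(i)·(γ^m)^2. -/
/-- A 3-CNF formula: a list of clauses, each a list of at most three literals.
A literal is a pair `(i, pol)` where `i` is a variable index (below `numVars`)
and `pol = true` means the positive literal `v i`, `pol = false` its negation. -/
structure Cnf3 where
  numVars : ℕ
  clauses : List (List (ℕ × Bool))
  clause_len : ∀ C ∈ clauses, C.length ≤ 3
  vars_lt : ∀ C ∈ clauses, ∀ l ∈ C, l.1 < numVars

namespace Cnf3

/-- The number of clauses. -/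
def numClauses (φ : Cnf3) : ℕ := φ.clauses.length

/-- A literal evaluates to true under assignment `a`. -/
def LitSat (a : ℕ → Bool) (l : ℕ × Bool) : Prop :=
  (if l.2 then a l.1 else !a l.1) = true

/-- The formula is satisfiable: some assignment makes every clause contain a true literal. -/
def Satisfiable (φ : Cnf3) : Prop :=
  ∃ a : ℕ → Bool, ∀ C ∈ φ.clauses, ∃ l ∈ C, LitSat a l

/-- The number of occurrences (with multiplicity over all clauses) of variable `i`
with polarity `pos`. -/
def occCount (φ : Cnf3) (i : ℕ) (pos : Bool) : ℕ :=
  (φ.clauses.map fun C => C.countP fun l => l.1 == i && l.2 == pos).sum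

/-- A formula is well-structured if every variable occurs, counted with multiplicity,
exactly twice positively and exactly once negatively. -/
def WellStructured (φ : Cnf3) : Prop :=
  ∀ i < φ.numVars, φ.occCount i true = 2 ∧ φ.occCount i false = 1

/-- The number of occurrences of variable `i` with polarity `pos` inside the `c`-th clause. -/
def clauseOcc (φ : Cnf3) (c i : ℕ) (pos : Bool) : ℕ :=
  (φ.clauses.getD c []).countP fun l => l.1 == i && l.2 == pos

end Cnf3

lemma digitsum_lt (C : ℕ) (f : ℕ → ℕ) :
    ∀ M : ℕ, (∀ t < M, f t < C) → ∑ t ∈ Finset.range M, C ^ t * f t < C ^ M := by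
  intro M
  induction M with
  | zero => simp
  | succ M ih =>
    intro hf
    rw [Finset.sum_range_succ]
    have h1 := ih (fun t ht => hf t (ht.trans (Nat.lt_succ_self M)))
    have h2 : f M < C := hf M (Nat.lt_succ_self M)
    calc ∑ t ∈ Finset.range M, C ^ t * f t + C ^ M * f M
        < C ^ M + C ^ M * f M := by omega
      _ = C ^ M * (f M + 1) := by ring
      _ ≤ C ^ M * C := Nat.mul_le_mul_left _ (by omega)
      _ = C ^ (M + 1) := (pow_succ C M).symm

lemma block_extraction_aux (L B : ℕ) (hB : 2 ≤ B) (w : ℕ → ℕ)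
    (hw : ∀ u < 2 ^ L, w u < B ^ 3)
    (xbin : ℕ → ℕ) (hxbin : ∀ ℓ, 1 ≤ ℓ → ℓ ≤ L → xbin ℓ ≤ 1)
    (z q r : ℕ → ℕ)
    (hz0 : z 0 = ∑ t ∈ Finset.range (2 ^ L), B ^ (3 * t) * w t)
    (hdiv : ∀ j < L, z j = q j * B ^ (3 * 2 ^ (L - (j + 1))) + r j)
    (hrem : ∀ j < L, r j < B ^ (3 * 2 ^ (L - (j + 1))))
    (hsel : ∀ j < L, z (j + 1) = q j * xbin (j + 1) + r j * (1 - xbin (j + 1))) :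
    z L = w (∑ ℓ ∈ Finset.Icc 1 L, 2 ^ (L - ℓ) * xbin ℓ) := by
  set S : ℕ → ℕ := fun j => ∑ ℓ ∈ Finset.Icc 1 j, 2 ^ (L - ℓ) * xbin ℓ with hS
  have hSsucc : ∀ j, S (j + 1) = S j + 2 ^ (L - (j + 1)) * xbin (j + 1) := by
    intro j
    simp only [hS]
    rw [Finset.sum_Icc_succ_top (by omega : 1 ≤ j + 1)]
  have hSb : ∀ j ≤ L, S j + 2 ^ (L - j) ≤ 2 ^ L := by
    intro j
    induction j with
    | zero => simp [hS]
    | succ j ih =>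
      intro hjL
      have hj : j < L := hjL
      have ihj := ih hj.le
      have hx : xbin (j + 1) ≤ 1 := hxbin _ (by omega) hjL
      have hpow : 2 ^ (L - j) = 2 * 2 ^ (L - (j + 1)) := by
        rw [← pow_succ']
        congr 1; omega
      have hmul : 2 ^ (L - (j + 1)) * xbin (j + 1) ≤ 2 ^ (L - (j + 1)) * 1 :=
        Nat.mul_le_mul_left _ hx
      rw [hSsucc]
      omega
  have key : ∀ j ≤ L, z j = ∑ t ∈ Finset.range (2 ^ (L - j)), B ^ (3 * t) * w (S j + t) := by
    intro j
    induction j with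
    | zero =>
      intro _
      simpa [hS] using hz0
    | succ j ih =>
      intro hjL
      have hj : j < L := hjL
      have hzj := ih hj.le
      set M := 2 ^ (L - (j + 1)) with hM
      have hpow : 2 ^ (L - j) = M + M := by
        rw [hM, ← two_mul, ← pow_succ']
        congr 1; omega
      set Q := ∑ t ∈ Finset.range M, B ^ (3 * t) * w (S j + M + t) with hQ
      set R := ∑ t ∈ Finset.range M, B ^ (3 * t) * w (S j + t) with hR
      have hsplit : z j = Q * B ^ (3 * M) + R := by
        rw [hzj, hpow, Finset.sum_range_add, hQ, Finset.sum_mul]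
        rw [add_comm]
        congr 1
        apply Finset.sum_congr rfl
        intro t _
        rw [mul_add 3 M t, pow_add, ← add_assoc]
        ring
      have hSbj := hSb j hj.le
      have hwb1 : ∀ t < M, w (S j + t) < B ^ 3 := by
        intro t ht
        exact hw _ (by omega)
      have hwb2 : ∀ t < M, w (S j + M + t) < B ^ 3 := by
        intro t ht
        exact hw _ (by omega)
      have hRlt : R < B ^ (3 * M) := by
        have := digitsum_lt (B ^ 3) (fun t => w (S j + t)) M hwb1
        simpa [hR, ← pow_mul, mul_comm 3] using this
      have hQlt : Q < B ^ (3 * M) := by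
        have := digitsum_lt (B ^ 3) (fun t => w (S j + M + t)) M hwb2
        simpa [hQ, ← pow_mul, mul_comm 3] using this
      have hD : 0 < B ^ (3 * M) := pow_pos (by omega) _
      have huniq : ∀ q0 r0 : ℕ, z j = q0 * B ^ (3 * M) + r0 → r0 < B ^ (3 * M) →
          q0 = z j / B ^ (3 * M) ∧ r0 = z j % B ^ (3 * M) := by
        intro q0 r0 he hr
        have key2 : r0 + B ^ (3 * M) * q0 = z j := by rw [he]; ring
        have := (Nat.div_mod_unique hD).2 ⟨key2, hr⟩
        exact ⟨this.1.symm, this.2.symm⟩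
      have h1 := huniq (q j) (r j) (hdiv j hj) (hrem j hj)
      have h2 := huniq Q R hsplit hRlt
      have hqQ : q j = Q := by rw [h1.1, h2.1]
      have hrR : r j = R := by rw [h1.2, h2.2]
      have hx : xbin (j + 1) ≤ 1 := hxbin _ (by omega) hjL
      have hsel' := hsel j hj
      interval_cases h : xbin (j + 1)
      · -- bit 0 : take remainder
        rw [hsel', hrR, hSsucc, h]
        simp [hR]
      · -- bit 1 : take quotient
        rw [hsel', hqQ, hSsucc, h]
        simp [hQ, ← hM]
  have := key L le_rfl
  simpa using this

/-- Decoding the `i`-th block from the encoding `Z` by iterated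
Euclidean division along the binary representation of `i`: all intermediate values
are uniquely determined by `i` and `Z`, and the final value `z_{log n}` equals
`C_pos1^(i) + C_pos2^(i)·γ^m + C_neg^(i)·(γ^m)^2`. -/
theorem block_extraction (L n m γ : ℕ) (φ : Cnf3) (jIdx kIdx lIdx : ℕ → ℕ)
    (hL : n = 2 ^ L) (hn : 2 ≤ n) (hm : 1 ≤ m) (hγ : 3 < γ)
    (hφn : φ.numVars = n) (hφm : φ.numClauses = m)
    (hws : φ.WellStructured)
    (hidx : ∀ i < n, jIdx i < m ∧ kIdx i < m ∧ lIdx i < m)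
    (hocc : ∀ i < n,
      (∀ c, φ.clauseOcc c i true =
        (if jIdx i = c then 1 else 0) + (if kIdx i = c then 1 else 0)) ∧
      (∀ c, φ.clauseOcc c i false = (if lIdx i = c then 1 else 0)))
    (Z : ℕ)
    (hZ : Z = ∑ i ∈ Finset.range n,
      ((γ ^ m) ^ (3 * i) * γ ^ jIdx i
        + (γ ^ m) ^ (3 * i + 1) * γ ^ kIdx i
        + (γ ^ m) ^ (3 * i + 2) * γ ^ lIdx i))
    (i : ℕ) (hi : i < n)
    (xbin : ℕ → ℕ) (hxbin : ∀ ℓ, 1 ≤ ℓ → ℓ ≤ L → xbin ℓ ≤ 1)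
    (hibin : i = ∑ ℓ ∈ Finset.Icc 1 L, 2 ^ (L - ℓ) * xbin ℓ)
    (z q r : ℕ → ℕ)
    (hz0 : z 0 = Z)
    (hdiv : ∀ j < L, z j = q j * (γ ^ m) ^ (3 * n / 2 ^ (j + 1)) + r j)
    (hrem : ∀ j < L, r j ≤ (γ ^ m) ^ (3 * n / 2 ^ (j + 1)) - 1)
    (hsel : ∀ j < L, z (j + 1) = q j * xbin (j + 1) + r j * (1 - xbin (j + 1))) :
    (∀ z' q' r' : ℕ → ℕ,
        z' 0 = Z →
        (∀ j < L, z' j = q' j * (γ ^ m) ^ (3 * n / 2 ^ (j + 1)) + r' j) →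
        (∀ j < L, r' j ≤ (γ ^ m) ^ (3 * n / 2 ^ (j + 1)) - 1) →
        (∀ j < L, z' (j + 1) = q' j * xbin (j + 1) + r' j * (1 - xbin (j + 1))) →
        (∀ j ≤ L, z' j = z j) ∧ (∀ j < L, q' j = q j ∧ r' j = r j)) ∧
    z L = γ ^ jIdx i + γ ^ kIdx i * γ ^ m + γ ^ lIdx i * (γ ^ m) ^ 2 := by
  have hγ1 : 1 < γ := by omega
  set B : ℕ := γ ^ m with hBdef
  have hB2 : 2 ≤ B := by
    calc 2 ≤ γ := by omega
      _ = γ ^ 1 := (pow_one γ).symm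
      _ ≤ γ ^ m := Nat.pow_le_pow_right (by omega) hm
  have hDpos : ∀ j, 0 < B ^ (3 * n / 2 ^ (j + 1)) := fun j => pow_pos (by omega) _
  -- remainders are strictly below the divisor
  have hrem' : ∀ j < L, r j < B ^ (3 * n / 2 ^ (j + 1)) := by
    intro j hj
    have := hrem j hj
    have := hDpos j
    omega
  -- uniqueness part
  have uniq_part : ∀ z' q' r' : ℕ → ℕ,
      z' 0 = Z →
      (∀ j < L, z' j = q' j * B ^ (3 * n / 2 ^ (j + 1)) + r' j) →
      (∀ j < L, r' j ≤ B ^ (3 * n / 2 ^ (j + 1)) - 1) →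
      (∀ j < L, z' (j + 1) = q' j * xbin (j + 1) + r' j * (1 - xbin (j + 1))) →
      (∀ j ≤ L, z' j = z j) ∧ (∀ j < L, q' j = q j ∧ r' j = r j) := by
    intro z' q' r' h0 h1 h2 h3
    have h2' : ∀ j < L, r' j < B ^ (3 * n / 2 ^ (j + 1)) := by
      intro j hj
      have := h2 j hj
      have := hDpos j
      omega
    have huniq : ∀ (j : ℕ), ∀ q0 r0 : ℕ, z j = q0 * B ^ (3 * n / 2 ^ (j + 1)) + r0 →
        r0 < B ^ (3 * n / 2 ^ (j + 1)) →
        q0 = z j / B ^ (3 * n / 2 ^ (j + 1)) ∧ r0 = z j % B ^ (3 * n / 2 ^ (j + 1)) := by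
      intro j q0 r0 he hr
      have key2 : r0 + B ^ (3 * n / 2 ^ (j + 1)) * q0 = z j := by rw [he]; ring
      have := (Nat.div_mod_unique (hDpos j)).2 ⟨key2, hr⟩
      exact ⟨this.1.symm, this.2.symm⟩
    have hqr : ∀ j < L, z' j = z j → q' j = q j ∧ r' j = r j := by
      intro j hj hzz
      have e1 := huniq j (q j) (r j) (hdiv j hj) (hrem' j hj)
      have e2 := huniq j (q' j) (r' j) (hzz ▸ h1 j hj) (h2' j hj)
      exact ⟨e2.1.trans e1.1.symm, e2.2.trans e1.2.symm⟩
    have hzeq : ∀ j ≤ L, z' j = z j := by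
      intro j
      induction j with
      | zero => intro _; rw [h0, hz0]
      | succ j ih =>
        intro hjL
        have hj : j < L := hjL
        have hzz := ih hj.le
        obtain ⟨hq, hr⟩ := hqr j hj hzz
        rw [h3 j hj, hsel j hj, hq, hr]
    exact ⟨hzeq, fun j hj => hqr j hj (hzeq j hj.le)⟩
  refine ⟨uniq_part, ?_⟩
  -- value part: use the auxiliary lemma
  set w : ℕ → ℕ := fun u => γ ^ jIdx u + γ ^ kIdx u * B + γ ^ lIdx u * B ^ 2 with hwdef
  have hw : ∀ u < 2 ^ L, w u < B ^ 3 := by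
    intro u hu
    have hu' : u < n := by rwa [hL]
    obtain ⟨hj', hk', hl'⟩ := hidx u hu'
    have ha : γ ^ jIdx u < B := Nat.pow_lt_pow_right hγ1 hj'
    have hb : γ ^ kIdx u < B := Nat.pow_lt_pow_right hγ1 hk'
    have hc : γ ^ lIdx u < B := Nat.pow_lt_pow_right hγ1 hl'
    have hb' : 1 + γ ^ kIdx u ≤ B := by omega
    have hc' : 1 + γ ^ lIdx u ≤ B := by omega
    calc w u = γ ^ jIdx u + γ ^ kIdx u * B + γ ^ lIdx u * B ^ 2 := rfl
      _ < B + γ ^ kIdx u * B + γ ^ lIdx u * B ^ 2 := by omega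
      _ = (1 + γ ^ kIdx u) * B + γ ^ lIdx u * B ^ 2 := by ring
      _ ≤ B * B + γ ^ lIdx u * B ^ 2 := by
          exact Nat.add_le_add_right (Nat.mul_le_mul_right B hb') _
      _ = (1 + γ ^ lIdx u) * B ^ 2 := by ring
      _ ≤ B * B ^ 2 := Nat.mul_le_mul_right _ hc'
      _ = B ^ 3 := by ring
  have hexp : ∀ j < L, 3 * n / 2 ^ (j + 1) = 3 * 2 ^ (L - (j + 1)) := by
    intro j hj
    have he : 3 * n = 3 * 2 ^ (L - (j + 1)) * 2 ^ (j + 1) := by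
      rw [hL, mul_assoc, ← pow_add]
      congr 2
      omega
    rw [he, Nat.mul_div_cancel _ (pow_pos (by omega) _)]
  have hz0' : z 0 = ∑ t ∈ Finset.range (2 ^ L), B ^ (3 * t) * w t := by
    rw [hz0, hZ, ← hL]
    apply Finset.sum_congr rfl
    intro t _
    simp only [hwdef, hBdef]
    ring
  have hdiv' : ∀ j < L, z j = q j * B ^ (3 * 2 ^ (L - (j + 1))) + r j := by
    intro j hj
    rw [← hexp j hj]
    exact hdiv j hj
  have hrem'' : ∀ j < L, r j < B ^ (3 * 2 ^ (L - (j + 1))) := by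
    intro j hj
    rw [← hexp j hj]
    exact hrem' j hj
  have := block_extraction_aux L B hB2 w hw xbin hxbin z q r hz0' hdiv' hrem'' hsel
  rw [this, ← hibin]
end

section
/- Let a well-structured 3-CNF formula with n ≥ 1 variables and m ≥ 1 clauses be given and let γ be an integer with γ > 4n. Then the formula is satisfiable if and only if there exist nonnegative integers λ_1^(i), λ_2^(i), λ_3^(i), λ_4^(i), λ_5^(i) for i ∈ {0,…,n−1} such that Σ_{i=0}^{n−1} Σ_{k=1}^{5} λ_k^(i) ≤ 2n and the following three equations hold: (1) Σ_{i=0}^{n−1} (λ_1^(i)·γ^{j_i} + λ_2^(i)·γ^{k_i} + λ_3^(i)·γ^{ℓ_i}) = Σ_{j=0}^{m−1} γ^j; (2) Σ_{i=0}^{n−1} (λ_1^(i) + λ_2^(i) + 2·λ_3^(i) + λ_4^(i))·γ^i = Σ_{i=0}^{n−1} 2·γ^i; (3) Σ_{i=0}^{n−1} (λ_4^(i) + λ_5^(i)) = 2n − m (as integers). -/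
lemma digit_unique (γ : ℕ) (hγ : 1 < γ) :
    ∀ (N : ℕ) (a b : ℕ → ℕ), (∀ i, a i < γ) → (∀ i, b i < γ) →
    (∑ i ∈ Finset.range N, a i * γ ^ i) = (∑ i ∈ Finset.range N, b i * γ ^ i) →
    ∀ i < N, a i = b i := by
  intro N
  induction N with
  | zero => intro a b _ _ _ i hi; omega
  | succ N ih =>
    intro a b ha hb heq i hi
    have h0 : ∀ c : ℕ → ℕ, (∑ i ∈ Finset.range (N+1), c i * γ ^ i)
        = c 0 + γ * ∑ i ∈ Finset.range N, c (i+1) * γ ^ i := by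
      intro c
      rw [Finset.sum_range_succ', pow_zero, mul_one, Nat.add_comm, Finset.mul_sum]
      congr 1
      apply Finset.sum_congr rfl
      intro x _
      ring
    rw [h0 a, h0 b] at heq
    have hmod : a 0 = b 0 := by
      have := congrArg (· % γ) heq
      simpa [Nat.add_mul_mod_self_left, Nat.mod_eq_of_lt (ha 0), Nat.mod_eq_of_lt (hb 0)] using this
    have htail : (∑ i ∈ Finset.range N, a (i+1) * γ ^ i) = ∑ i ∈ Finset.range N, b (i+1) * γ ^ i := by
      have hγ0 : 0 < γ := by omega
      have := heq
      rw [hmod] at this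
      have := Nat.add_left_cancel this
      exact Nat.eq_of_mul_eq_mul_left hγ0 this
    rcases Nat.eq_zero_or_pos i with h | h
    · subst h; exact hmod
    · obtain ⟨i', rfl⟩ := Nat.exists_eq_succ_of_ne_zero (by omega : i ≠ 0)
      exact ih (fun i => a (i+1)) (fun i => b (i+1)) (fun i => ha _) (fun i => hb _) htail i' (by omega)

lemma expand_sum (n m γ : ℕ) (e : Fin n → ℕ) (he : ∀ i, e i < m) (f : Fin n → ℕ) :
    ∑ i : Fin n, f i * γ ^ e i
      = ∑ c ∈ Finset.range m, (∑ i : Fin n, f i * (if e i = c then 1 else 0)) * γ ^ c := by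
  simp_rw [Finset.sum_mul]
  rw [Finset.sum_comm]
  apply Finset.sum_congr rfl
  intro i _
  have h : ∀ c, f i * (if e i = c then 1 else 0) * γ ^ c
      = if e i = c then f i * γ ^ c else 0 := by
    intro c; split <;> simp
  rw [Finset.sum_congr rfl fun c _ => h c, Finset.sum_ite_eq]
  simp [Finset.mem_range.mpr (he i)]

lemma expand3 (n m γ : ℕ) (j k l : Fin n → ℕ)
    (hj : ∀ i, j i < m) (hk : ∀ i, k i < m) (hl : ∀ i, l i < m)
    (f g h : Fin n → ℕ) :
    ∑ i : Fin n, (f i * γ ^ j i + g i * γ ^ k i + h i * γ ^ l i)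
      = ∑ c ∈ Finset.range m,
          (∑ i : Fin n, (f i * (if j i = c then 1 else 0)
            + g i * (if k i = c then 1 else 0)
            + h i * (if l i = c then 1 else 0))) * γ ^ c := by
  rw [Finset.sum_add_distrib, Finset.sum_add_distrib,
    expand_sum n m γ j hj f, expand_sum n m γ k hk g, expand_sum n m γ l hl h,
    ← Finset.sum_add_distrib, ← Finset.sum_add_distrib]
  apply Finset.sum_congr rfl
  intro c _
  rw [Finset.sum_add_distrib, Finset.sum_add_distrib, add_mul, add_mul]

lemma three_term_ne (x y z : ℕ) (p q r : Prop) [Decidable p] [Decidable q] [Decidable r]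
    (h : x * (if p then 1 else 0) + y * (if q then 1 else 0) + z * (if r then 1 else 0) ≠ 0) :
    (0 < x ∧ p) ∨ (0 < y ∧ q) ∨ (0 < z ∧ r) := by
  split_ifs at h <;> simp_all <;> omega

/-- A well-structured 3-CNF formula with `n ≥ 1` variables,
`m ≥ 1` clauses and an integer `γ > 4n` is satisfiable if and only if there are
nonnegative integer coefficients `λ_k^(i)` with total sum at most `2n` satisfying
the three linear-combination equations. -/
theorem satisfiable_iff_linear_combination (n m γ : ℕ) (φ : Cnf3)
    (jIdx kIdx lIdx : ℕ → ℕ)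
    (hn : 1 ≤ n) (hm : 1 ≤ m) (hγ : 4 * n < γ)
    (hφn : φ.numVars = n) (hφm : φ.numClauses = m)
    (hws : φ.WellStructured)
    (hidx : ∀ i < n, jIdx i < m ∧ kIdx i < m ∧ lIdx i < m)
    (hocc : ∀ i < n,
      (∀ c, φ.clauseOcc c i true =
        (if jIdx i = c then 1 else 0) + (if kIdx i = c then 1 else 0)) ∧
      (∀ c, φ.clauseOcc c i false = (if lIdx i = c then 1 else 0))) :
    φ.Satisfiable ↔
      ∃ lam : Fin n → Fin 5 → ℕ,
        (∑ i, ∑ k, lam i k) ≤ 2 * n ∧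
        (∑ i : Fin n,
            (lam i 0 * γ ^ jIdx (i : ℕ) + lam i 1 * γ ^ kIdx (i : ℕ)
              + lam i 2 * γ ^ lIdx (i : ℕ)))
          = (∑ j ∈ Finset.range m, γ ^ j) ∧
        (∑ i : Fin n,
            (lam i 0 + lam i 1 + 2 * lam i 2 + lam i 3) * γ ^ (i : ℕ))
          = (∑ i ∈ Finset.range n, 2 * γ ^ i) ∧
        (∑ i : Fin n, ((lam i 3 : ℤ) + (lam i 4 : ℤ)))
          = 2 * (n : ℤ) - (m : ℤ) := by
  classical
  have hγ1 : 1 < γ := by omega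
  have hlenm : φ.clauses.length = m := hφm
  have hJ : ∀ i : Fin n, jIdx i.1 < m := fun i => (hidx i.1 i.2).1
  have hK : ∀ i : Fin n, kIdx i.1 < m := fun i => (hidx i.1 i.2).2.1
  have hL : ∀ i : Fin n, lIdx i.1 < m := fun i => (hidx i.1 i.2).2.2
  -- occurrence / membership translation
  have occ_mem : ∀ (c : ℕ) (hc : c < φ.clauses.length) (v : ℕ) (pos : Bool),
      0 < φ.clauseOcc c v pos → (v, pos) ∈ φ.clauses[c] := by
    intro c hc v pos hpos
    unfold Cnf3.clauseOcc at hpos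
    rw [List.getD_eq_getElem _ _ hc] at hpos
    obtain ⟨lit, hmemlit, hp⟩ := List.countP_pos_iff.mp hpos
    simp only [Bool.and_eq_true, beq_iff_eq] at hp
    obtain ⟨h1, h2⟩ := hp
    obtain ⟨x, y⟩ := lit
    simp_all
  have mem_occ : ∀ (c : ℕ) (hc : c < φ.clauses.length) (v : ℕ) (pos : Bool),
      (v, pos) ∈ φ.clauses[c] → 0 < φ.clauseOcc c v pos := by
    intro c hc v pos hmem
    unfold Cnf3.clauseOcc
    rw [List.getD_eq_getElem _ _ hc]
    exact List.countP_pos_iff.mpr ⟨(v, pos), hmem, by simp⟩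
  constructor
  · -- forward direction
    rintro ⟨a, hsat⟩
    have hch : ∀ c : Fin m, ∃ lit, lit ∈ φ.clauses[(c : ℕ)]'(by omega) ∧ Cnf3.LitSat a lit := by
      intro c
      obtain ⟨lit, h1, h2⟩ := hsat (φ.clauses[(c : ℕ)]'(by omega)) (List.getElem_mem _)
      exact ⟨lit, h1, h2⟩
    choose ch hchmem hchsat using hch
    set J : Fin n → Fin m := fun i => ⟨jIdx i.1, hJ i⟩ with hJdef
    set K : Fin n → Fin m := fun i => ⟨kIdx i.1, hK i⟩ with hKdef
    set L : Fin n → Fin m := fun i => ⟨lIdx i.1, hL i⟩ with hLdef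
    set l1 : Fin n → ℕ := fun i => if ch (J i) = (i.1, true) then 1 else 0 with hl1def
    set l2 : Fin n → ℕ := fun i => if ch (K i) = (i.1, true) ∧ K i ≠ J i then 1 else 0 with hl2def
    set l3 : Fin n → ℕ := fun i => if ch (L i) = (i.1, false) then 1 else 0 with hl3def
    set l4 : Fin n → ℕ := fun i => 2 - (l1 i + l2 i + 2 * l3 i) with hl4def
    -- basic consequences of satisfaction
    have asat : ∀ (c : Fin m) (v : ℕ) (p : Bool), ch c = (v, p) → a v = p := by
      intro c v p hc
      have := hchsat c
      rw [hc] at this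
      unfold Cnf3.LitSat at this
      cases p <;> simpa using this
    have hl1le : ∀ i, l1 i ≤ 1 := by intro i; simp only [hl1def]; split <;> omega
    have hl2le : ∀ i, l2 i ≤ 1 := by intro i; simp only [hl2def]; split <;> omega
    have hl3le : ∀ i, l3 i ≤ 1 := by intro i; simp only [hl3def]; split <;> omega
    have hexcl : ∀ i, l3 i = 1 → l1 i = 0 ∧ l2 i = 0 := by
      intro i h3
      have hchL : ch (L i) = (i.1, false) := by
        by_contra hne
        rw [hl3def] at h3; simp only [if_neg hne] at h3; omega
      have hafalse : a i.1 = false := asat _ _ _ hchL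
      constructor
      · rw [hl1def]; simp only
        split
        · next hchJ => have := asat _ _ _ hchJ; simp_all
        · rfl
      · rw [hl2def]; simp only
        split
        · next hchK => have := asat _ _ _ hchK.1; simp_all
        · rfl
    have hdig2 : ∀ i, l1 i + l2 i + 2 * l3 i + l4 i = 2 := by
      intro i
      have h1 := hl1le i; have h2 := hl2le i; have h3 := hl3le i
      have he := hexcl i
      simp only [hl4def]
      rcases Nat.lt_or_ge (l3 i) 1 with h | h
      · omega
      · have := he (by omega); omega
    -- the digit of equation (1) at each clause is 1
    have hD1 : ∀ c, c < m → (∑ i : Fin n,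
        (l1 i * (if jIdx i.1 = c then 1 else 0) + l2 i * (if kIdx i.1 = c then 1 else 0)
          + l3 i * (if lIdx i.1 = c then 1 else 0))) = 1 := by
      intro c hc
      set c' : Fin m := ⟨c, hc⟩ with hc'def
      rcases hvp : ch c' with ⟨v, p⟩
      have hvn : v < n := by
        have hcl : c < φ.clauses.length := by rw [hlenm]; exact hc
        have := φ.vars_lt (φ.clauses[c]'hcl) (List.getElem_mem hcl) (ch c') (hchmem c')
        rw [hvp, hφn] at this
        exact this
      set iv : Fin n := ⟨v, hvn⟩ with hivdef
      have hiv : (iv : ℕ) = v := rfl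
      have hav : a v = p := asat c' v p hvp
      have hzero : ∀ b : Fin n, b ∈ Finset.univ → b ≠ iv →
          l1 b * (if jIdx b.1 = c then 1 else 0) + l2 b * (if kIdx b.1 = c then 1 else 0)
            + l3 b * (if lIdx b.1 = c then 1 else 0) = 0 := by
        intro b _ hbne
        have hb1 : l1 b * (if jIdx b.1 = c then 1 else 0) = 0 := by
          by_cases hjc : jIdx b.1 = c
          · have hJb : J b = c' := Fin.ext hjc
            have hne2 : ch (J b) ≠ (b.1, true) := by
              rw [hJb, hvp]
              intro h
              exact hbne (Fin.ext (congrArg Prod.fst h).symm)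
            simp [hl1def, hne2]
          · simp [hjc]
        have hb2 : l2 b * (if kIdx b.1 = c then 1 else 0) = 0 := by
          by_cases hkc : kIdx b.1 = c
          · have hKb : K b = c' := Fin.ext hkc
            have hne2 : ¬(ch (K b) = (b.1, true) ∧ K b ≠ J b) := by
              rintro ⟨h, -⟩
              rw [hKb, hvp] at h
              exact hbne (Fin.ext (congrArg Prod.fst h).symm)
            simp [hl2def, hne2]
          · simp [hkc]
        have hb3 : l3 b * (if lIdx b.1 = c then 1 else 0) = 0 := by
          by_cases hlc : lIdx b.1 = c
          · have hLb : L b = c' := Fin.ext hlc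
            have hne2 : ch (L b) ≠ (b.1, false) := by
              rw [hLb, hvp]
              intro h
              exact hbne (Fin.ext (congrArg Prod.fst h).symm)
            simp [hl3def, hne2]
          · simp [hlc]
        omega
      have hmain : l1 iv * (if jIdx iv.1 = c then 1 else 0)
          + l2 iv * (if kIdx iv.1 = c then 1 else 0)
          + l3 iv * (if lIdx iv.1 = c then 1 else 0) = 1 := by
        cases p with
        | true =>
          have hmemv : (v, true) ∈ φ.clauses[c]'(by rw [hlenm]; exact hc) := by
            have := hchmem c'
            rw [hvp] at this
            exact this
          have hoccv := mem_occ c (by rw [hlenm]; exact hc) v true hmemv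
          rw [(hocc v hvn).1 c] at hoccv
          have h3z : l3 iv = 0 := by
            have hne2 : ch (L iv) ≠ (iv.1, false) := by
              intro h
              have h2 := asat _ _ _ h
              rw [hiv, hav] at h2
              exact Bool.noConfusion h2
            simp [hl3def, hne2]
          by_cases hjc : jIdx v = c
          · have hJiv : J iv = c' := Fin.ext hjc
            have h1one : l1 iv = 1 := by
              have hcheq : ch (J iv) = (iv.1, true) := by rw [hJiv, hvp]
              simp [hl1def, hcheq]
            have h2term : l2 iv * (if kIdx iv.1 = c then 1 else 0) = 0 := by
              by_cases hkc : kIdx v = c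
              · have hKiv : K iv = c' := Fin.ext hkc
                have hne2 : ¬(ch (K iv) = (iv.1, true) ∧ K iv ≠ J iv) := by
                  rintro ⟨-, hne⟩
                  exact hne (hKiv.trans hJiv.symm)
                simp [hl2def, hne2]
              · rw [if_neg (show ¬ kIdx iv.1 = c from hkc), mul_zero]
            rw [h1one, h3z, h2term, if_pos (show jIdx iv.1 = c from hjc)]
            simp
          · have hkc : kIdx v = c := by
              rw [if_neg hjc] at hoccv
              by_contra hkc
              rw [if_neg hkc] at hoccv
              omega
            have hKiv : K iv = c' := Fin.ext hkc
            have h2one : l2 iv = 1 := by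
              have hne2 : ch (K iv) = (iv.1, true) ∧ K iv ≠ J iv := by
                refine ⟨by rw [hKiv, hvp], ?_⟩
                rw [hKiv]
                intro h
                apply hjc
                have h2 := congrArg Fin.val h
                exact h2.symm
              simp [hl2def, hne2]
            rw [h2one, h3z, if_neg (show ¬ jIdx iv.1 = c from hjc),
              if_pos (show kIdx iv.1 = c from hkc)]
            simp
        | false =>
          have hmemv : (v, false) ∈ φ.clauses[c]'(by rw [hlenm]; exact hc) := by
            have := hchmem c'
            rw [hvp] at this
            exact this
          have hoccv := mem_occ c (by rw [hlenm]; exact hc) v false hmemv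
          rw [(hocc v hvn).2 c] at hoccv
          have hlc : lIdx v = c := by
            by_contra hlc
            rw [if_neg hlc] at hoccv
            omega
          have hLiv : L iv = c' := Fin.ext hlc
          have h3one : l3 iv = 1 := by
            have hcheq : ch (L iv) = (iv.1, false) := by rw [hLiv, hvp]
            simp [hl3def, hcheq]
          have h1z : l1 iv = 0 := by
            have hne2 : ch (J iv) ≠ (iv.1, true) := by
              intro h
              have h2 := asat _ _ _ h
              rw [hiv, hav] at h2
              exact Bool.noConfusion h2
            simp [hl1def, hne2]
          have h2z : l2 iv = 0 := by
            have hne2 : ¬(ch (K iv) = (iv.1, true) ∧ K iv ≠ J iv) := by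
              rintro ⟨h, -⟩
              have h2 := asat _ _ _ h
              rw [hiv, hav] at h2
              exact Bool.noConfusion h2
            simp [hl2def, hne2]
          rw [h1z, h2z, h3one, if_pos (show lIdx iv.1 = c from hlc)]
          simp
      rw [Finset.sum_eq_single_of_mem iv (Finset.mem_univ iv) hzero]
      exact hmain
    have S3 : ∑ i : Fin n, (l1 i + l2 i + l3 i) = m := by
      have e := expand3 n m 1 (fun i => jIdx i.1) (fun i => kIdx i.1) (fun i => lIdx i.1)
        hJ hK hL l1 l2 l3
      simp only [one_pow, mul_one] at e
      rw [e, Finset.sum_congr rfl (fun c hc => hD1 c (Finset.mem_range.mp hc))]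
      simp
    have S2 : ∑ i : Fin n, (l1 i + l2 i + 2 * l3 i + l4 i) = 2 * n := by
      rw [Finset.sum_congr rfl (fun i _ => hdig2 i)]
      simp [Finset.sum_const, Finset.card_univ]
      omega
    refine ⟨fun i => ![l1 i, l2 i, l3 i, l4 i, l3 i], ?_, ?_, ?_, ?_⟩
    · have hfive : ∀ i : Fin n, ∑ k, (![l1 i, l2 i, l3 i, l4 i, l3 i] : Fin 5 → ℕ) k
          = l1 i + l2 i + 2 * l3 i + l4 i := by
        intro i
        rw [Fin.sum_univ_five]
        show l1 i + l2 i + l3 i + l4 i + l3 i = _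
        ring
      exact le_of_eq (by
        rw [Finset.sum_congr rfl (fun i _ => hfive i)]
        exact S2)
    · show ∑ i : Fin n, (l1 i * γ ^ jIdx i.1 + l2 i * γ ^ kIdx i.1 + l3 i * γ ^ lIdx i.1)
        = ∑ j ∈ Finset.range m, γ ^ j
      rw [expand3 n m γ (fun i => jIdx i.1) (fun i => kIdx i.1) (fun i => lIdx i.1)
        hJ hK hL l1 l2 l3,
        Finset.sum_congr rfl (fun c hc => by rw [hD1 c (Finset.mem_range.mp hc)])]
      simp
    · show ∑ i : Fin n, (l1 i + l2 i + 2 * l3 i + l4 i) * γ ^ (i : ℕ)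
        = ∑ i ∈ Finset.range n, 2 * γ ^ i
      rw [Finset.sum_congr rfl (fun i (_ : i ∈ Finset.univ) => by rw [hdig2 i])]
      exact Fin.sum_univ_eq_sum_range (fun i => 2 * γ ^ i) n
    · show ∑ i : Fin n, ((l4 i : ℤ) + (l3 i : ℤ)) = 2 * (n : ℤ) - m
      have hsplit : (∑ i : Fin n, (l4 i + l3 i)) + (∑ i : Fin n, (l1 i + l2 i + l3 i))
          = ∑ i : Fin n, (l1 i + l2 i + 2 * l3 i + l4 i) := by
        rw [← Finset.sum_add_distrib]
        apply Finset.sum_congr rfl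
        intro i _
        ring
      rw [S3, S2] at hsplit
      have hcast : ∑ i : Fin n, ((l4 i : ℤ) + (l3 i : ℤ))
          = ((∑ i : Fin n, (l4 i + l3 i) : ℕ) : ℤ) := by
        push_cast
        rfl
      rw [hcast]
      omega
  · -- converse direction
    rintro ⟨lam, hsum, h1, h2, h3⟩
    have htot : ∀ i : Fin n, lam i 0 + lam i 1 + lam i 2 + lam i 3 + lam i 4 ≤ 2 * n := by
      intro i
      have h5 : ∑ k, lam i k = lam i 0 + lam i 1 + lam i 2 + lam i 3 + lam i 4 :=
        Fin.sum_univ_five _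
      have hle : ∑ k, lam i k ≤ ∑ i, ∑ k, lam i k :=
        Finset.single_le_sum (f := fun i : Fin n => ∑ k, lam i k)
          (fun _ _ => Nat.zero_le _) (Finset.mem_univ i)
      omega
    -- digits of equation (2)
    have hdig2 : ∀ i : Fin n, lam i 0 + lam i 1 + 2 * lam i 2 + lam i 3 = 2 := by
      set A : ℕ → ℕ := fun x => if h : x < n then
          lam ⟨x, h⟩ 0 + lam ⟨x, h⟩ 1 + 2 * lam ⟨x, h⟩ 2 + lam ⟨x, h⟩ 3 else 0 with hAdef
      have hAi : ∀ i : Fin n, A i.1 = lam i 0 + lam i 1 + 2 * lam i 2 + lam i 3 := by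
        intro i
        simp only [hAdef, i.2, dif_pos, Fin.eta]
      have hAlt : ∀ x, A x < γ := by
        intro x
        simp only [hAdef]
        split
        · next h => have := htot ⟨x, h⟩; omega
        · omega
      have h2' : ∑ x ∈ Finset.range n, A x * γ ^ x = ∑ x ∈ Finset.range n, 2 * γ ^ x := by
        rw [← Fin.sum_univ_eq_sum_range (fun x => A x * γ ^ x) n, ← h2]
        apply Finset.sum_congr rfl
        intro i _
        rw [hAi i]
      intro i
      have := digit_unique γ hγ1 n A (fun _ => 2) hAlt (fun _ => by show 2 < γ; omega) h2' i.1 i.2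
      exact (hAi i).symm.trans this
    -- digits of equation (1)
    set D : ℕ → ℕ := fun c => ∑ i : Fin n,
        (lam i 0 * (if jIdx i.1 = c then 1 else 0) + lam i 1 * (if kIdx i.1 = c then 1 else 0)
          + lam i 2 * (if lIdx i.1 = c then 1 else 0)) with hDdef
    have hsum3 : ∑ i : Fin n, (lam i 0 + lam i 1 + lam i 2) ≤ 2 * n := by
      calc ∑ i : Fin n, (lam i 0 + lam i 1 + lam i 2) ≤ ∑ i, ∑ k, lam i k := by
            apply Finset.sum_le_sum
            intro i _
            rw [Fin.sum_univ_five]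
            omega
        _ ≤ 2 * n := hsum
    have hDb : ∀ c, D c ≤ 2 * n := by
      intro c
      refine le_trans ?_ hsum3
      simp only [hDdef]
      apply Finset.sum_le_sum
      intro i _
      have e1 : lam i 0 * (if jIdx i.1 = c then 1 else 0) ≤ lam i 0 := by split <;> simp
      have e2 : lam i 1 * (if kIdx i.1 = c then 1 else 0) ≤ lam i 1 := by split <;> simp
      have e3 : lam i 2 * (if lIdx i.1 = c then 1 else 0) ≤ lam i 2 := by split <;> simp
      omega
    have hD1 : ∀ c < m, D c = 1 := by
      have heq : ∑ c ∈ Finset.range m, D c * γ ^ c = ∑ c ∈ Finset.range m, 1 * γ ^ c := by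
        simp only [hDdef]
        rw [← expand3 n m γ (fun i => jIdx i.1) (fun i => kIdx i.1) (fun i => lIdx i.1)
          hJ hK hL (fun i => lam i 0) (fun i => lam i 1) (fun i => lam i 2)]
        simpa using h1
      have hDlt : ∀ c, D c < γ := fun c => by have := hDb c; omega
      intro c hc
      exact digit_unique γ hγ1 m D (fun _ => 1) hDlt (fun _ => by show 1 < γ; omega) heq c hc
    -- the satisfying assignment
    set a : ℕ → Bool := fun v => if h : v < n then
        decide (0 < lam ⟨v, h⟩ 0 + lam ⟨v, h⟩ 1) else false with hadef
    have haval : ∀ i : Fin n, a i.1 = decide (0 < lam i 0 + lam i 1) := by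
      intro i
      simp only [hadef, i.2, dif_pos, Fin.eta]
    refine ⟨a, ?_⟩
    intro C hC
    obtain ⟨c, hc, hCe⟩ := List.mem_iff_getElem.mp hC
    have hcm : c < m := by omega
    have hDc : D c ≠ 0 := by rw [hD1 c hcm]; omega
    simp only [hDdef] at hDc
    obtain ⟨i, -, hne⟩ := Finset.exists_ne_zero_of_sum_ne_zero hDc
    rcases three_term_ne _ _ _ _ _ _ hne with ⟨hx, hj⟩ | ⟨hx, hk⟩ | ⟨hx, hl⟩
    · refine ⟨(i.1, true), ?_, ?_⟩
      · rw [← hCe]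
        apply occ_mem c hc
        rw [(hocc i.1 i.2).1 c, if_pos hj]
        omega
      · unfold Cnf3.LitSat
        simp only [if_pos]
        rw [haval i]
        simp
        omega
    · refine ⟨(i.1, true), ?_, ?_⟩
      · rw [← hCe]
        apply occ_mem c hc
        rw [(hocc i.1 i.2).1 c, if_pos hk]
        omega
      · unfold Cnf3.LitSat
        simp only [if_pos]
        rw [haval i]
        simp
        omega
    · refine ⟨(i.1, false), ?_, ?_⟩
      · rw [← hCe]
        apply occ_mem c hc
        rw [(hocc i.1 i.2).2 c, if_pos hl]
        omega
      · unfold Cnf3.LitSat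
        have h12 : lam i 0 + lam i 1 = 0 := by have := hdig2 i; omega
        simp only []
        rw [haval i]
        simp [h12]
end

section
/- Let n ≥ 1 and let γ be an integer with γ > 4n. Let λ_1^(i), λ_2^(i), λ_3^(i), λ_4^(i), λ_5^(i) be nonnegative integers for i ∈ {0,…,n−1} with Σ_{i=0}^{n−1} Σ_{k=1}^{5} λ_k^(i) ≤ 2n, and suppose Σ_{i=0}^{n−1} (λ_1^(i) + λ_2^(i) + 2·λ_3^(i) + λ_4^(i))·γ^i = Σ_{i=0}^{n−1} 2·γ^i. Then for every i ∈ {0,…,n−1} one has λ_1^(i) + λ_2^(i) + 2·λ_3^(i) + λ_4^(i) = 2; in particular, if λ_3^(i) ≥ 1 then λ_1^(i) = λ_2^(i) = 0 (a variable set to false cannot simultaneously be used positively). -/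
lemma digits_unique (γ : ℕ) : ∀ m (f g : ℕ → ℕ),
    (∀ i < m, f i < γ) → (∀ i < m, g i < γ) →
    (∑ i ∈ Finset.range m, f i * γ ^ i) = (∑ i ∈ Finset.range m, g i * γ ^ i) →
    ∀ i < m, f i = g i := by
  intro m
  induction m with
  | zero => intro f g _ _ _ i hi; omega
  | succ m ih =>
    intro f g hf hg hsum i hi
    have hγ : 0 < γ := lt_of_le_of_lt (Nat.zero_le _) (hf 0 (Nat.succ_pos m))
    have key : ∀ h : ℕ → ℕ, (∑ i ∈ Finset.range (m+1), h i * γ ^ i)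
        = γ * (∑ i ∈ Finset.range m, h (i+1) * γ ^ i) + h 0 := by
      intro h
      rw [Finset.sum_range_succ', Finset.mul_sum]
      simp [pow_succ, mul_comm, mul_assoc, mul_left_comm]
    rw [key f, key g] at hsum
    have h0 : f 0 = g 0 := by
      have hf0 := hf 0 (Nat.succ_pos m)
      have hg0 := hg 0 (Nat.succ_pos m)
      have := congrArg (· % γ) hsum
      simpa [Nat.mul_add_mod, Nat.mod_eq_of_lt hf0, Nat.mod_eq_of_lt hg0] using this
    have hrest : (∑ i ∈ Finset.range m, f (i+1) * γ ^ i)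
        = ∑ i ∈ Finset.range m, g (i+1) * γ ^ i := by
      have := hsum
      rw [h0] at this
      have := Nat.add_right_cancel this
      exact Nat.eq_of_mul_eq_mul_left hγ this
    rcases Nat.eq_zero_or_pos i with rfl | hpos
    · exact h0
    · obtain ⟨j, rfl⟩ : ∃ j, i = j + 1 := ⟨i - 1, by omega⟩
      exact ih (fun i => f (i+1)) (fun i => g (i+1))
        (fun i hi => hf (i+1) (by omega)) (fun i hi => hg (i+1) (by omega)) hrest j (by omega)

/-- Let `n ≥ 1` and `γ > 4n`. If nonnegative integers `λ_k^(i)`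
(for `i < n`, `k ∈ {1,…,5}`) have total sum at most `2n` and satisfy
`Σ_i (λ_1^(i) + λ_2^(i) + 2λ_3^(i) + λ_4^(i))·γ^i = Σ_i 2·γ^i`, then for every `i`
one has `λ_1^(i) + λ_2^(i) + 2λ_3^(i) + λ_4^(i) = 2`; in particular, if `λ_3^(i) ≥ 1`
then `λ_1^(i) = λ_2^(i) = 0`. -/
theorem consistent_assignment (n γ : ℕ) (hn : 1 ≤ n) (hγ : 4 * n < γ)
    (lam : Fin n → Fin 5 → ℕ)
    (hsum : (∑ i, ∑ k, lam i k) ≤ 2 * n)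
    (heq : (∑ i : Fin n, (lam i 0 + lam i 1 + 2 * lam i 2 + lam i 3) * γ ^ (i : ℕ))
      = ∑ i : Fin n, 2 * γ ^ (i : ℕ)) :
    ∀ i : Fin n,
      (lam i 0 + lam i 1 + 2 * lam i 2 + lam i 3 = 2) ∧
      (1 ≤ lam i 2 → lam i 0 = 0 ∧ lam i 1 = 0) := by
  set F : ℕ → ℕ := fun i => if h : i < n then
    (lam ⟨i, h⟩ 0 + lam ⟨i, h⟩ 1 + 2 * lam ⟨i, h⟩ 2 + lam ⟨i, h⟩ 3) else 0 with hF
  have hFval : ∀ i : Fin n, F i = lam i 0 + lam i 1 + 2 * lam i 2 + lam i 3 := by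
    intro i; simp [hF, i.isLt]
  have hFbound : ∀ i < n, F i < γ := by
    intro i hi
    have h1 : ∑ k, lam ⟨i, hi⟩ k ≤ 2 * n :=
      le_trans (Finset.single_le_sum (f := fun j : Fin n => ∑ k, lam j k) (fun _ _ => Nat.zero_le _) (Finset.mem_univ (⟨i, hi⟩ : Fin n))) hsum
    have h2 : lam ⟨i, hi⟩ 0 + lam ⟨i, hi⟩ 1 + lam ⟨i, hi⟩ 2 + lam ⟨i, hi⟩ 3
        ≤ ∑ k, lam ⟨i, hi⟩ k := by
      rw [Fin.sum_univ_five]; omega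
    have := hFval ⟨i, hi⟩
    simp only [Fin.val_mk] at this
    omega
  have hGbound : ∀ i < n, (fun _ : ℕ => 2) i < γ := fun i _ => show 2 < γ by omega
  have hsum' : (∑ i ∈ Finset.range n, F i * γ ^ i)
      = ∑ i ∈ Finset.range n, 2 * γ ^ i := by
    rw [← Fin.sum_univ_eq_sum_range (fun i => F i * γ ^ i),
        ← Fin.sum_univ_eq_sum_range (fun i => 2 * γ ^ i), ← heq]
    exact Finset.sum_congr rfl fun i _ => by rw [hFval i]
  have hdig := digits_unique γ n F (fun _ => 2) hFbound hGbound hsum'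
  intro i
  have h2 : lam i 0 + lam i 1 + 2 * lam i 2 + lam i 3 = 2 := by
    rw [← hFval i]; exact hdig i i.isLt
  exact ⟨h2, fun h3 => by omega⟩
end
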